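/- Let N ≥ 2 be an integer and let φ_1(x) = N⁻¹(x + t_1), …, φ_m(x) = N⁻¹(x + t_m) be contracting similarities of ℝ^d with t_1, …, t_m ∈ {0,1,…,N−1}^d. Let P be a face of [0,1]^d of dimension at least 1. If φ_i([0,1]^d) ∩ P ≠ ∅ for all 1 ≤ i ≤ m, then (φ_1 ∘ ⋯ ∘ φ_m([0,1]^d)) ∩ P = (φ_1 ∘ ⋯ ∘ φ_m(P)) ∩ P. -/

import Mathlib

open Set

/-- The closed unit cube `[0,1]^d` in `ℝ^d`. -/
def unitCube (d : ℕ) : Set (Fin d → ℝ) := {x | ∀ m, x m ∈ Set.Icc (0 : ℝ) 1}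

/-- The contracting similarity `x ↦ N⁻¹(x + t)` on `ℝ^d`. -/
noncomputable def cmap {d : ℕ} (N : ℕ) (t : Fin d → ℕ) (x : Fin d → ℝ) : Fin d → ℝ :=
  fun m => (x m + t m) / N

/-- The face of `[0,1]^d` determined by an index set `s` and prescribed values `a`
(`a m ∈ {0,1}` for `m ∈ s`); its dimension is `d - s.card`. -/
def face {d : ℕ} (s : Finset (Fin d)) (a : Fin d → ℝ) : Set (Fin d → ℝ) :=
  {x | x ∈ unitCube d ∧ ∀ m ∈ s, x m = a m}

lemma cmap_mem_cube {d N : ℕ} (hN : 0 < N) (t : Fin d → ℕ) (ht : ∀ k, t k < N)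
    {x : Fin d → ℝ} (hx : x ∈ unitCube d) : cmap N t x ∈ unitCube d := by
  intro k
  have h1 := (hx k).1
  have h2 := (hx k).2
  have htk : (t k : ℝ) ≤ (N : ℝ) - 1 := by
    have : (t k : ℝ) + 1 ≤ N := by exact_mod_cast ht k
    linarith
  have hNpos : (0:ℝ) < N := by exact_mod_cast hN
  simp only [cmap]
  constructor
  · positivity
  · rw [div_le_one hNpos]; linarith

lemma cmap_coord_iff {d N : ℕ} (hN : 0 < N) (t : Fin d → ℕ) {k : Fin d} {a : ℝ}
    (hcond : (a = 0 → t k = 0) ∧ (a = 1 → (t k : ℝ) = (N : ℝ) - 1))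
    (hak : a = 0 ∨ a = 1) (x : Fin d → ℝ) :
    (cmap N t x k = a ↔ x k = a) := by
  have hNpos : (0:ℝ) < N := by exact_mod_cast hN
  rcases hak with h0 | h1
  · subst h0
    have ht0 : (t k : ℝ) = 0 := by exact_mod_cast hcond.1 rfl
    simp only [cmap, ht0, add_zero]
    rw [div_eq_zero_iff]
    constructor
    · rintro (h | h)
      · exact h
      · exact absurd h (by positivity : (N:ℝ) ≠ 0)
    · intro h; exact Or.inl h
  · subst h1
    have ht1 : (t k : ℝ) = (N:ℝ) - 1 := hcond.2 rfl
    simp only [cmap, ht1]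
    rw [div_eq_one_iff_eq (by positivity : (N:ℝ) ≠ 0)]
    constructor <;> intro h <;> linarith

lemma fold_prop {d N : ℕ} (hN : 0 < N) (s : Finset (Fin d)) (a : Fin d → ℝ)
    (ha : ∀ k ∈ s, a k = 0 ∨ a k = 1)
    (L : List (Fin d → ℕ)) (hL : ∀ t ∈ L, ∀ k, t k < N)
    (hcond : ∀ t ∈ L, ∀ k ∈ s, (a k = 0 → t k = 0) ∧ (a k = 1 → (t k : ℝ) = (N:ℝ) - 1))
    (x : Fin d → ℝ) (hx : x ∈ unitCube d) :
    (L.map (cmap N)).foldr (· ∘ ·) id x ∈ unitCube d ∧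
    ∀ k ∈ s, ((L.map (cmap N)).foldr (· ∘ ·) id x k = a k ↔ x k = a k) := by
  induction L with
  | nil => exact ⟨hx, fun k _ => Iff.rfl⟩
  | cons t L ih =>
    obtain ⟨hcube, hiff⟩ := ih (fun u hu => hL u (List.mem_cons_of_mem _ hu))
      (fun u hu => hcond u (List.mem_cons_of_mem _ hu))
    have ht : ∀ k, t k < N := hL t List.mem_cons_self
    simp only [List.map_cons, List.foldr_cons, Function.comp_apply]
    refine ⟨cmap_mem_cube hN t ht hcube, fun k hk => ?_⟩
    rw [cmap_coord_iff hN t (hcond t List.mem_cons_self k hk) (ha k hk)]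
    exact hiff k hk

/-- **Corollary.** Let `φ_1, …, φ_m` be maps `x ↦ N⁻¹(x + t_i)` with
`t_i ∈ {0,…,N-1}^d`, and let `P` be a face of `[0,1]^d` of dimension at least `1`. If
`φ_i([0,1]^d) ∩ P ≠ ∅` for all `i`, then
`(φ_1 ∘ ⋯ ∘ φ_m)([0,1]^d) ∩ P = (φ_1 ∘ ⋯ ∘ φ_m)(P) ∩ P`. -/
theorem comp_image_inter_face
    {d N m : ℕ} (hN : 2 ≤ N) (hm : 1 ≤ m)
    (t : Fin m → Fin d → ℕ) (ht : ∀ i k, t i k < N)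
    (s : Finset (Fin d)) (a : Fin d → ℝ) (ha : ∀ k ∈ s, a k = 0 ∨ a k = 1)
    (hdim : s.card < d)
    (h : ∀ i : Fin m, (cmap N (t i) '' unitCube d ∩ face s a).Nonempty) :
    ((List.ofFn fun i : Fin m => cmap N (t i)).foldr (· ∘ ·) id '' unitCube d)
        ∩ face s a =
      ((List.ofFn fun i : Fin m => cmap N (t i)).foldr (· ∘ ·) id '' face s a)
        ∩ face s a := by
  have hN0 : 0 < N := by omega
  have hNpos : (0:ℝ) < N := by exact_mod_cast hN0
  -- The key fact about the digits
  have hcond : ∀ i : Fin m, ∀ k ∈ s,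
      (a k = 0 → t i k = 0) ∧ (a k = 1 → (t i k : ℝ) = (N:ℝ) - 1) := by
    intro i k hk
    obtain ⟨z, ⟨y, hy, rfl⟩, hzcube, hzface⟩ := h i
    have heq : (y k + t i k) / N = a k := hzface k hk
    have hy0 := (hy k).1
    have hy1 := (hy k).2
    constructor
    · intro h0
      rw [h0, div_eq_zero_iff] at heq
      have htk : (0:ℝ) ≤ t i k := by positivity
      rcases heq with h' | h'
      · have : (t i k : ℝ) = 0 := by linarith
        exact_mod_cast this
      · exact absurd h' (by positivity : (N:ℝ) ≠ 0)
    · intro h1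
      rw [h1, div_eq_one_iff_eq (by positivity : (N:ℝ) ≠ 0)] at heq
      have hub : (t i k : ℝ) ≤ (N:ℝ) - 1 := by
        have : (t i k : ℝ) + 1 ≤ N := by exact_mod_cast ht i k
        linarith
      linarith
  have hlist : (List.ofFn fun i : Fin m => cmap N (t i)) = (List.ofFn t).map (cmap N) := by
    rw [List.map_ofFn]; rfl
  rw [hlist]
  have hL : ∀ u ∈ List.ofFn t, ∀ k, u k < N := by
    intro u hu k
    obtain ⟨i, rfl⟩ := List.mem_ofFn.mp hu
    exact ht i k
  have hcond' : ∀ u ∈ List.ofFn t, ∀ k ∈ s,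
      (a k = 0 → u k = 0) ∧ (a k = 1 → (u k : ℝ) = (N:ℝ) - 1) := by
    intro u hu
    obtain ⟨i, rfl⟩ := List.mem_ofFn.mp hu
    exact hcond i
  ext z
  constructor
  · rintro ⟨⟨x, hx, rfl⟩, hzface⟩
    obtain ⟨hcube, hiff⟩ := fold_prop hN0 s a ha (List.ofFn t) hL hcond' x hx
    have hxface : x ∈ face s a :=
      ⟨hx, fun k hk => (hiff k hk).mp (hzface.2 k hk)⟩
    exact ⟨⟨x, hxface, rfl⟩, hzface⟩
  · rintro ⟨⟨x, hx, rfl⟩, hzface⟩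
    exact ⟨⟨x, hx.1, rfl⟩, hzface⟩
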